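/- Let L be a q-linearized polynomial in F_q[x] such that L(x)/x is irreducible over F_q. Then L is not a q^s-linearized polynomial for any s > 1. -/

import Mathlib

open Polynomial

/-- Arithmetic helper: for `s, t ≥ 2`, `s*t + 2 ≤ t^s + s`. -/
lemma stmt16_aux_arith : ∀ (s : ℕ), 2 ≤ s → ∀ (t : ℕ), 2 ≤ t → s * t + 2 ≤ t ^ s + s := by
  intro s hs
  induction s, hs using Nat.le_induction with
  | base =>
    intro t ht
    have h1 : 2 * t ≤ t * t := Nat.mul_le_mul_right t ht
    have : t ^ 2 = t * t := sq t
    omega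
  | succ s hs ih =>
    intro t ht
    have ihp := ih t ht
    have h1 : t ≤ t ^ s := Nat.le_self_pow (by omega) t
    have h2 : t ^ s * 2 ≤ t ^ s * t := Nat.mul_le_mul_left _ ht
    have h3 : t ^ (s + 1) = t ^ s * t := pow_succ t s
    have h4 : (s + 1) * t = s * t + t := by ring
    omega

/-- Coefficient of a "linearized-shape" polynomial at `t ^ j`. -/
lemma stmt16_coeff_rep {F : Type*} [Field F] (N : ℕ) (d : ℕ → F) (t : ℕ) (ht : 2 ≤ t)
    (j : ℕ) (hj : j ≤ N) :
    (∑ i ∈ Finset.range (N + 1), C (d i) * X ^ t ^ i).coeff (t ^ j) = d j := by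
  rw [finset_sum_coeff]
  rw [Finset.sum_eq_single j]
  · simp [coeff_X_pow]
  · intro i _ hij
    simp only [coeff_C_mul, coeff_X_pow, mul_ite, mul_one, mul_zero, ite_eq_right_iff]
    have : t ^ i ≠ t ^ j := fun h => hij (Nat.pow_right_injective ht h)
    intro h
    exact absurd h.symm this
  · intro h
    exact absurd (Finset.mem_range.mpr (by omega)) h

/-- natDegree of a "linearized-shape" polynomial. -/
lemma stmt16_natDegree_rep {F : Type*} [Field F] (N : ℕ) (d : ℕ → F) (t : ℕ) (ht : 2 ≤ t)
    (hd : d N ≠ 0) :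
    (∑ i ∈ Finset.range (N + 1), C (d i) * X ^ t ^ i).natDegree = t ^ N := by
  apply le_antisymm
  · apply natDegree_sum_le_of_forall_le
    intro i hi
    refine le_trans (natDegree_C_mul_le _ _) ?_
    rw [natDegree_X_pow]
    exact Nat.pow_le_pow_right (by omega) (by simpa using Nat.lt_succ_iff.mp (Finset.mem_range.mp hi))
  · apply le_natDegree_of_ne_zero
    rw [stmt16_coeff_rep N d t ht N le_rfl]
    exact hd

/-- If `L ∈ F_q[x]` is q-linearized with `L(x)/x` irreducible over `F_q`,
then `L` is not a `q^s`-linearized polynomial for any `s > 1`. -/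
theorem stmt_16 (p a q n : ℕ) [Fact p.Prime] (ha : 0 < a) (hq : q = p ^ a)
    (Fq : Type) [Field Fq] [Fintype Fq] (hFq : Fintype.card Fq = q)
    (c : ℕ → Fq) (hn : c n ≠ 0)
    (L : Polynomial Fq) (hL : L = ∑ i ∈ Finset.range (n + 1), C (c i) * X ^ q ^ i)
    (M : Polynomial Fq) (hM : L = X * M) (hirr : Irreducible M) :
    ∀ s : ℕ, 1 < s →
      ¬ ∃ (m : ℕ) (b : ℕ → Fq), b m ≠ 0 ∧
        L = ∑ i ∈ Finset.range (m + 1), C (b i) * X ^ (q ^ s) ^ i := by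
  intro s hs
  rintro ⟨m, b, hbm, hLb⟩
  have hp : p.Prime := Fact.out
  have hq2 : 2 ≤ q := by
    rw [hq]
    calc 2 = 2 ^ 1 := rfl
    _ ≤ p ^ a := Nat.pow_le_pow_left hp.two_le a |>.trans' (Nat.pow_le_pow_right (by omega) ha)
  have hQ2 : 2 ≤ q ^ s := le_trans hq2 (Nat.le_self_pow (by omega) q)
  -- degrees
  have hMne : M ≠ 0 := hirr.ne_zero
  have hdegL1 : L.natDegree = q ^ n := by
    rw [hL]; exact stmt16_natDegree_rep n c q hq2 hn
  have hdegL2 : L.natDegree = (q ^ s) ^ m := by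
    rw [hLb]; exact stmt16_natDegree_rep m b (q ^ s) hQ2 hbm
  have hnm : n = s * m := by
    have : q ^ n = q ^ (s * m) := by rw [← hdegL1, hdegL2, ← pow_mul]
    exact Nat.pow_right_injective hq2 this
  have hdegXM : L.natDegree = 1 + M.natDegree := by
    rw [hM, natDegree_mul X_ne_zero hMne, natDegree_X]
  have hm1 : 1 ≤ m := by
    by_contra hm0
    have hm0 : m = 0 := by omega
    have hn0 : n = 0 := by rw [hnm, hm0, Nat.mul_zero]
    have : M.natDegree = 0 := by
      have h0 : q ^ n = 1 := by rw [hn0, pow_zero]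
      omega
    have hMC : M = C (M.coeff 0) := eq_C_of_natDegree_le_zero (by omega)
    have hc0 : M.coeff 0 ≠ 0 := fun h => hMne (by rw [hMC, h, map_zero])
    exact hirr.not_isUnit (hMC ▸ (isUnit_C.mpr (isUnit_iff_ne_zero.mpr hc0)))
  have hn2 : 2 ≤ n := by
    calc 2 = 2 * 1 := rfl
    _ ≤ s * m := Nat.mul_le_mul hs hm1
    _ = n := hnm.symm
  have hqn4 : 4 ≤ q ^ n := by
    calc 4 = 2 ^ 2 := rfl
    _ ≤ q ^ 2 := Nat.pow_le_pow_left hq2 2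
    _ ≤ q ^ n := Nat.pow_le_pow_right (by omega) hn2
  have hdegM : M.natDegree = q ^ n - 1 := by omega
  -- b 0 ≠ 0
  have hcoeff1 : L.coeff 1 = b 0 := by
    have := stmt16_coeff_rep m b (q ^ s) hQ2 0 (Nat.zero_le m)
    rw [pow_zero] at this
    rw [hLb, this]
  have hcoeffM0 : M.coeff 0 = L.coeff 1 := by
    rw [hM]
    exact (coeff_X_mul M 0).symm
  have hb0 : b 0 ≠ 0 := by
    intro hb0
    have hX : X ∣ M := X_dvd_iff.mpr (by rw [hcoeffM0, hcoeff1, hb0])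
    obtain ⟨w, hw⟩ := hX
    rcases hirr.isUnit_or_isUnit hw with hu | hu
    · exact not_isUnit_X hu
    · have hwne : w ≠ 0 := hu.ne_zero
      have hwdeg : w.natDegree = 0 := natDegree_eq_zero_of_isUnit hu
      have : M.natDegree = 1 := by
        rw [hw, natDegree_mul X_ne_zero hwne, natDegree_X, hwdeg]
      omega
  -- characteristic
  have hcharFq : CharP Fq p := by
    have hr : CharP Fq (ringChar Fq) := ringChar.charP Fq
    obtain ⟨k, hrp, hcard⟩ := FiniteField.card Fq (ringChar Fq)
    have hpr : p = ringChar Fq := by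
      have hdvd : p ∣ (ringChar Fq) ^ (k : ℕ) := by
        rw [← hcard, hFq, hq]
        exact dvd_pow_self p (by omega)
      exact (Nat.prime_dvd_prime_iff_eq hp hrp).mp (hp.dvd_of_dvd_pow hdvd)
    rwa [hpr]
  set K := AlgebraicClosure Fq with hK
  haveI := Classical.decEq K
  haveI hcharK : CharP K p := charP_of_injective_algebraMap (algebraMap Fq K).injective p
  -- root of M
  have hdegMpos : 0 < M.natDegree := by omega
  obtain ⟨α, hroot⟩ := IsAlgClosed.exists_aeval_eq_zero K M
    (degree_ne_of_natDegree_ne (show M.natDegree ≠ 0 by omega))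
  have hrootL : aeval α L = 0 := by
    rw [hM, map_mul, hroot, mul_zero]
  -- the polynomial g = sum b_i X^i
  set g : Polynomial Fq := ∑ i ∈ Finset.range (m + 1), C (b i) * X ^ i with hg
  have hgcoeff : ∀ k, g.coeff k = if k ∈ Finset.range (m + 1) then b k else 0 := by
    intro k
    rw [hg, finset_sum_coeff]
    rw [Finset.sum_congr rfl (g := fun i => if k = i then b i else 0)
      (fun i _ => by simp [coeff_C_mul, coeff_X_pow])]
    exact Finset.sum_ite_eq _ k b
  have hgm : g.coeff m = b m := by rw [hgcoeff]; simp
  have hg0 : g.coeff 0 = b 0 := by rw [hgcoeff]; simp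
  have hgne : g ≠ 0 := fun h => hbm (by rw [← hgm, h, coeff_zero])
  have hgdeg : g.natDegree = m := by
    apply le_antisymm
    · apply natDegree_sum_le_of_forall_le
      intro i hi
      refine le_trans (natDegree_C_mul_le _ _) ?_
      rw [natDegree_X_pow]
      exact Nat.lt_succ_iff.mp (Finset.mem_range.mp hi)
    · exact le_natDegree_of_ne_zero (hgm ▸ hbm)
  -- the ring A = AdjoinRoot g and the unit `root g`
  set A := AdjoinRoot g with hA
  haveI : Nontrivial A := by
    refine ⟨1, 0, ?_⟩
    intro h
    have : (AdjoinRoot.mk g) 1 = 0 := by rw [map_one, h]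
    rw [AdjoinRoot.mk_eq_zero] at this
    have := natDegree_eq_zero_of_isUnit (isUnit_of_dvd_one this)
    omega
  haveI : Fintype A := Module.fintypeOfFintype (AdjoinRoot.powerBasis hgne).basis
  have hcardA : Fintype.card A = q ^ m := by
    have hdim : (AdjoinRoot.powerBasis hgne).dim = m := hgdeg
    rw [Module.card_fintype (AdjoinRoot.powerBasis hgne).basis, hFq, Fintype.card_fin, hdim]
  have hroot_g : aeval (AdjoinRoot.root g) g = 0 := by
    rw [AdjoinRoot.aeval_eq, AdjoinRoot.mk_self]
  have key : AdjoinRoot.root g * aeval (AdjoinRoot.root g) g.divX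
      + algebraMap Fq A (b 0) = 0 := by
    have := X_mul_divX_add g
    calc AdjoinRoot.root g * aeval (AdjoinRoot.root g) g.divX + algebraMap Fq A (b 0)
        = aeval (AdjoinRoot.root g) (X * g.divX + C (g.coeff 0)) := by
          rw [map_add, map_mul, aeval_X, aeval_C, hg0]
      _ = aeval (AdjoinRoot.root g) g := by rw [this]
      _ = 0 := hroot_g
  have h2 : AdjoinRoot.root g * aeval (AdjoinRoot.root g) g.divX
      = -(algebraMap Fq A (b 0)) := eq_neg_of_add_eq_zero_left key
  have hv : AdjoinRoot.root g *
      (-(algebraMap Fq A (b 0)⁻¹ * aeval (AdjoinRoot.root g) g.divX)) = 1 := by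
    calc AdjoinRoot.root g * (-(algebraMap Fq A (b 0)⁻¹ * aeval (AdjoinRoot.root g) g.divX))
        = -(algebraMap Fq A (b 0)⁻¹ * (AdjoinRoot.root g * aeval (AdjoinRoot.root g) g.divX)) := by
          ring
      _ = algebraMap Fq A (b 0)⁻¹ * algebraMap Fq A (b 0) := by rw [h2]; ring
      _ = 1 := by rw [← map_mul, inv_mul_cancel₀ hb0, map_one]
  set u : Aˣ := Units.mkOfMulEqOne _ _ hv with hu
  haveI := Classical.decEq A
  set T := orderOf u with hT
  have hT0 : 0 < T := orderOf_pos u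
  have hTlt : T < q ^ m := by
    rw [← hcardA]
    exact lt_of_le_of_lt orderOf_le_card_univ
      (Fintype.card_lt_of_injective_of_notMem (Units.val : Aˣ → A) Units.val_injective
        (b := 0) (by rintro ⟨w, hw⟩; exact w.ne_zero hw))
  have hrootT : (AdjoinRoot.root g) ^ T = 1 := by
    have h1 : (u ^ T : Aˣ) = 1 := pow_orderOf_eq_one u
    have h2 : ((u ^ T : Aˣ) : A) = (AdjoinRoot.root g) ^ T := by
      rw [Units.val_pow_eq_pow_val]
      rfl
    rw [h1] at h2
    exact h2.symm
  have hdvdXT : g ∣ (X : Polynomial Fq) ^ T - 1 := by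
    rw [← AdjoinRoot.mk_eq_zero]
    rw [map_sub, map_pow, AdjoinRoot.mk_X, map_one, hrootT, sub_self]
  -- the semilinear map σL
  have hfq_pow : ∀ (t : Fq) (j : ℕ), t ^ q ^ j = t := by
    intro t j
    rw [← hFq]
    exact FiniteField.pow_card_pow j t
  have hchar_add : ∀ (j : ℕ) (x y : K), (x + y) ^ q ^ j = x ^ q ^ j + y ^ q ^ j := by
    intro j x y
    have : q ^ j = p ^ (a * j) := by rw [hq, ← pow_mul]
    rw [this]
    exact add_pow_char_pow x y p (a * j)
  set σL : K →ₗ[Fq] K :=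
    { toFun := fun y => y ^ q ^ s
      map_add' := fun x y => hchar_add s x y
      map_smul' := by
        intro t y
        simp only [RingHom.id_apply]
        rw [Algebra.smul_def, Algebra.smul_def, mul_pow, ← map_pow, hfq_pow] } with hσL
  have hσpow : ∀ (i : ℕ) (y : K), ((σL ^ i) y) = y ^ (q ^ s) ^ i := by
    intro i
    induction i with
    | zero => intro y; simp
    | succ i ih =>
      intro y
      rw [pow_succ, Module.End.mul_apply]
      have hy : σL y = y ^ q ^ s := rfl
      rw [hy, ih, ← pow_mul, ← pow_succ']
  -- aeval σL g applied to α is 0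
  have heval : ∀ f : Polynomial Fq, (aeval σL f) α = ∑ k ∈ f.support, f.coeff k • α ^ (q ^ s) ^ k := by
    intro f
    conv_lhs => rw [f.as_sum_support_C_mul_X_pow]
    rw [map_sum, LinearMap.sum_apply]
    apply Finset.sum_congr rfl
    intro k _
    rw [map_mul, aeval_C, map_pow, aeval_X, Module.End.mul_apply,
      ← hσpow k α, Module.algebraMap_end_apply]
  have heval_g : (aeval σL g) α = 0 := by
    have h1 : (aeval σL g) α = ∑ i ∈ Finset.range (m + 1), b i • α ^ (q ^ s) ^ i := by
      rw [hg, map_sum, LinearMap.sum_apply]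
      apply Finset.sum_congr rfl
      intro i _
      rw [map_mul, aeval_C, map_pow, aeval_X, Module.End.mul_apply,
        ← hσpow i α, Module.algebraMap_end_apply]
    have h2 : (0 : K) = ∑ i ∈ Finset.range (m + 1), b i • α ^ (q ^ s) ^ i := by
      rw [← hrootL, hLb, map_sum]
      apply Finset.sum_congr rfl
      intro i _
      rw [map_mul, aeval_C, aeval_X_pow, Algebra.smul_def]
    rw [h1, ← h2]
  have hαQT : α ^ (q ^ s) ^ T = α := by
    obtain ⟨h, hh⟩ := hdvdXT
    have h3 : (aeval σL ((X : Polynomial Fq) ^ T - 1)) α = 0 := by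
      rw [hh, mul_comm, map_mul, Module.End.mul_apply, heval_g, map_zero]
    rw [map_sub, map_pow, aeval_X, map_one, LinearMap.sub_apply,
      hσpow T α, Module.End.one_apply] at h3
    exact sub_eq_zero.mp h3
  have hαfix : α ^ q ^ (s * T) = α := by
    rw [pow_mul]
    exact hαQT
  -- the fixed subfield of the (s*T)-th Frobenius power
  have hexp1 : 1 < q ^ (s * T) := by
    have : 1 ≤ s * T := Nat.mul_pos (by omega) hT0
    calc 1 < 2 := by omega
    _ ≤ q := hq2
    _ = q ^ 1 := (pow_one q).symm
    _ ≤ q ^ (s * T) := Nat.pow_le_pow_right (by omega) this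
  have hchar_neg : ∀ (x : K), (-x) ^ q ^ (s * T) = -(x ^ q ^ (s * T)) := by
    intro x
    have hpe : q ^ (s * T) = p ^ (a * (s * T)) := by rw [hq, ← pow_mul]
    rw [hpe, neg_pow, neg_one_pow_char_pow, neg_mul, one_mul]
  set F : Subfield K :=
    { carrier := {y : K | y ^ q ^ (s * T) = y}
      mul_mem' := by
        intro x y hx hy
        simp only [Set.mem_setOf_eq] at *
        rw [mul_pow, hx, hy]
      one_mem' := by simp
      add_mem' := by
        intro x y hx hy
        simp only [Set.mem_setOf_eq] at *
        have hpe : q ^ (s * T) = p ^ (a * (s * T)) := by rw [hq, ← pow_mul]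
        rw [hpe] at hx hy ⊢
        rw [add_pow_char_pow x y p (a * (s * T)), hx, hy]
      zero_mem' := by
        simp only [Set.mem_setOf_eq]
        exact zero_pow (by omega)
      neg_mem' := by
        intro x hx
        simp only [Set.mem_setOf_eq] at *
        rw [hchar_neg, hx]
      inv_mem' := by
        intro x hx
        simp only [Set.mem_setOf_eq] at *
        rw [inv_pow, hx] } with hF
  have halgF : ∀ t : Fq, algebraMap Fq K t ∈ F := by
    intro t
    show (algebraMap Fq K t) ^ q ^ (s * T) = algebraMap Fq K t
    rw [← map_pow, hfq_pow]
  set Fint := Subfield.toIntermediateField F halgF with hFint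
  -- the intermediate field Fq⟮α⟯
  haveI : Algebra.IsAlgebraic Fq K := AlgebraicClosure.isAlgebraic Fq
  have hint : IsIntegral Fq α := (Algebra.IsAlgebraic.isAlgebraic α).isIntegral
  have hmin_dvd : minpoly Fq α ∣ M := minpoly.dvd Fq α hroot
  have hassoc : Associated (minpoly Fq α) M :=
    (minpoly.irreducible hint).associated_of_dvd hirr hmin_dvd
  have hmd : (minpoly Fq α).natDegree = q ^ n - 1 := by
    obtain ⟨w, hw⟩ := hassoc
    have hwu : IsUnit (w : Polynomial Fq) := w.isUnit
    have : M.natDegree = (minpoly Fq α).natDegree := by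
      rw [← hw, natDegree_mul (minpoly.ne_zero hint) hwu.ne_zero,
        natDegree_eq_zero_of_isUnit hwu, add_zero]
    omega
  have hEF : IntermediateField.adjoin Fq {α} ≤ Fint := by
    rw [IntermediateField.adjoin_le_iff]
    intro y hy
    rw [Set.mem_singleton_iff] at hy
    subst hy
    exact hαfix
  haveI : FiniteDimensional Fq (IntermediateField.adjoin Fq {α}) := by
    have := IntermediateField.adjoin.finiteDimensional hint
    convert this using 2
  have hfinrank : Module.finrank Fq (IntermediateField.adjoin Fq {α}) = q ^ n - 1 := by
    have := IntermediateField.adjoin.finrank hint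
    rw [← hmd]
    convert this using 3
  set E := IntermediateField.adjoin Fq {α} with hE
  have bE := Module.finBasis Fq E
  haveI : Fintype E := Module.fintypeOfFintype bE
  have hcardE : Fintype.card E = q ^ (q ^ n - 1) := by
    rw [Module.card_fintype bE, hFq, Fintype.card_fin, hfinrank]
  -- all elements of E are roots of X^(q^(s*T)) - X
  set P : Polynomial K := X ^ q ^ (s * T) - X with hP
  have hdegP : P.natDegree = q ^ (s * T) :=
    FiniteField.X_pow_card_sub_X_natDegree_eq K hexp1
  have hPne : P ≠ 0 := FiniteField.X_pow_card_sub_X_ne_zero K hexp1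
  have hroots : ∀ y : E, (y : K) ∈ P.roots := by
    intro y
    rw [mem_roots hPne]
    have hyF : (y : K) ∈ F := hEF y.2
    have hyfix : (y : K) ^ q ^ (s * T) = (y : K) := hyF
    show P.IsRoot (y : K)
    simp [hP, IsRoot, hyfix]
  have hcard_le : Fintype.card E ≤ q ^ (s * T) := by
    have h1 : (Finset.univ : Finset E).card ≤ P.roots.toFinset.card := by
      apply Finset.card_le_card_of_injOn (fun y : E => (y : K))
      · intro y _
        rw [Finset.mem_coe, Multiset.mem_toFinset]
        exact hroots y
      · intro x _ y _ hxy
        exact Subtype.ext hxy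
    calc Fintype.card E = (Finset.univ : Finset E).card := rfl
      _ ≤ P.roots.toFinset.card := h1
      _ ≤ Multiset.card P.roots := Multiset.toFinset_card_le _
      _ ≤ P.natDegree := P.card_roots'
      _ = q ^ (s * T) := hdegP
  have hle : q ^ n - 1 ≤ s * T := by
    rw [hcardE] at hcard_le
    exact (Nat.pow_le_pow_iff_right hq2).mp hcard_le
  -- final arithmetic contradiction
  have haux := stmt16_aux_arith s hs (q ^ m) (le_trans hq2 (Nat.le_self_pow (by omega) q))
  have hqnm : q ^ n = (q ^ m) ^ s := by rw [← pow_mul, mul_comm, hnm]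
  have h5 : s * T + s ≤ s * q ^ m := by
    calc s * T + s = s * (T + 1) := by ring
    _ ≤ s * q ^ m := Nat.mul_le_mul_left s (by omega)
  rw [← hqnm] at haux
  set X1 := q ^ n
  set Y1 := s * T
  set Z1 := s * q ^ m
  omega
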